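/- Suppose a symmetric positive semi-definite d×d matrix Σ̂ satisfies p^T Σ̂ p ≥ κ‖p‖_2^2 for all p in the cone {p : ‖p_{S^c}‖_1 ≤ 3‖p_S‖_1} where |S| ≤ s. Let β̂ minimize ‖β‖_1 subject to ‖ξ - Σ̂β‖_∞ ≤ λ, where ξ ∈ R^d and β* is supported on S with ‖ξ - Σ̂β*‖_∞ ≤ λ. Then δ = β̂ - β* lies in the cone, and ‖δ‖_2 ≤ 4λ√s/κ and ‖δ‖_1 ≤ 8λ s/κ. -/

import Mathlib

open Matrix BigOperators

/-- Dantzig-selector rates under the restricted eigenvalue condition: if `β̂` has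
minimal `ℓ₁` norm among `β` with `‖ξ - Σ̂β‖_∞ ≤ λ`, and `β*` is `S`-supported and
feasible, then `δ = β̂ - β*` lies in the cone, `‖δ‖₂ ≤ 4λ√s/κ` and `‖δ‖₁ ≤ 8λs/κ`. -/
theorem stmt_17 (d s : ℕ) (κ lam : ℝ) (hκ : 0 < κ) (hlam : 0 < lam)
    (Shat : Matrix (Fin d) (Fin d) ℝ) (hsymm : Shat.IsSymm) (hpsd : Shat.PosSemidef)
    (S : Finset (Fin d)) (hS : S.card ≤ s)
    (hRE : ∀ p : Fin d → ℝ, (∑ i ∈ Sᶜ, |p i| ≤ 3 * ∑ i ∈ S, |p i|) →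
      κ * ∑ i, p i ^ 2 ≤ p ⬝ᵥ Shat.mulVec p)
    (ξ βstar βhat : Fin d → ℝ)
    (hsupp : ∀ i ∉ S, βstar i = 0)
    (hfeasStar : ∀ j, |ξ j - Shat.mulVec βstar j| ≤ lam)
    (hfeasHat : ∀ j, |ξ j - Shat.mulVec βhat j| ≤ lam)
    (hmin : ∀ β : Fin d → ℝ, (∀ j, |ξ j - Shat.mulVec β j| ≤ lam) →
      ∑ i, |βhat i| ≤ ∑ i, |β i|) :
    (∑ i ∈ Sᶜ, |βhat i - βstar i| ≤ 3 * ∑ i ∈ S, |βhat i - βstar i|) ∧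
    Real.sqrt (∑ i, (βhat i - βstar i) ^ 2) ≤ 4 * lam * Real.sqrt s / κ ∧
    ∑ i, |βhat i - βstar i| ≤ 8 * lam * s / κ := by
  set δ : Fin d → ℝ := fun i => βhat i - βstar i with hδ
  have hSnn : (0:ℝ) ≤ ∑ i ∈ S, |δ i| := Finset.sum_nonneg fun i _ => abs_nonneg _
  -- cone condition with constant 1
  have hβ1 : ∑ i, |βhat i| ≤ ∑ i, |βstar i| := hmin βstar hfeasStar
  have hsplit : ∀ f : Fin d → ℝ, ∑ i ∈ S, f i + ∑ i ∈ Sᶜ, f i = ∑ i, f i :=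
    fun f => Finset.sum_add_sum_compl S f
  have hstar_off : ∑ i ∈ Sᶜ, |βstar i| = 0 :=
    Finset.sum_eq_zero fun i hi => by rw [hsupp i (Finset.mem_compl.mp hi), abs_zero]
  have hhat_off : ∑ i ∈ Sᶜ, |βhat i| = ∑ i ∈ Sᶜ, |δ i| :=
    Finset.sum_congr rfl fun i hi => by
      simp [hδ, hsupp i (Finset.mem_compl.mp hi)]
  have hSineq : ∑ i ∈ S, |βstar i| ≤ ∑ i ∈ S, |βhat i| + ∑ i ∈ S, |δ i| := by
    rw [← Finset.sum_add_distrib]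
    refine Finset.sum_le_sum fun i _ => ?_
    have : βstar i = βhat i - δ i := by simp [hδ]
    rw [this]
    exact (abs_sub _ _)
  have hcone1 : ∑ i ∈ Sᶜ, |δ i| ≤ ∑ i ∈ S, |δ i| := by
    have h := hsplit (fun i => |βhat i|)
    have h' := hsplit (fun i => |βstar i|)
    beta_reduce at h h'
    nlinarith [hβ1, hstar_off, hhat_off, hSineq]
  have hcone : ∑ i ∈ Sᶜ, |δ i| ≤ 3 * ∑ i ∈ S, |δ i| := by linarith
  -- ℓ∞ bound on Σ̂δ
  have hmv : ∀ j, Shat.mulVec δ j = Shat.mulVec βhat j - Shat.mulVec βstar j := by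
    intro j
    have : δ = βhat - βstar := by funext i; simp [hδ]
    rw [this, Matrix.mulVec_sub, Pi.sub_apply]
  have hinf : ∀ j, |Shat.mulVec δ j| ≤ 2 * lam := by
    intro j
    have h1 := hfeasStar j
    have h2 := hfeasHat j
    have : Shat.mulVec δ j = (ξ j - Shat.mulVec βstar j) - (ξ j - Shat.mulVec βhat j) := by
      rw [hmv j]; ring
    rw [this]
    calc |(ξ j - Shat.mulVec βstar j) - (ξ j - Shat.mulVec βhat j)|
        ≤ |ξ j - Shat.mulVec βstar j| + |ξ j - Shat.mulVec βhat j| := abs_sub _ _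
      _ ≤ 2 * lam := by linarith
  -- quadratic form bound
  have hquad : κ * ∑ i, δ i ^ 2 ≤ (∑ i, |δ i|) * (2 * lam) := by
    refine (hRE δ hcone).trans ?_
    calc δ ⬝ᵥ Shat.mulVec δ = ∑ i, δ i * Shat.mulVec δ i := rfl
      _ ≤ ∑ i, |δ i| * (2 * lam) := by
          refine Finset.sum_le_sum fun i _ => ?_
          calc δ i * Shat.mulVec δ i ≤ |δ i * Shat.mulVec δ i| := le_abs_self _
            _ = |δ i| * |Shat.mulVec δ i| := abs_mul _ _
            _ ≤ |δ i| * (2 * lam) := mul_le_mul_of_nonneg_left (hinf i) (abs_nonneg _)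
      _ = (∑ i, |δ i|) * (2 * lam) := by rw [← Finset.sum_mul]
  set N : ℝ := Real.sqrt (∑ i, δ i ^ 2) with hN
  have hNnn : 0 ≤ N := Real.sqrt_nonneg _
  have hN2 : N ^ 2 = ∑ i, δ i ^ 2 :=
    Real.sq_sqrt (Finset.sum_nonneg fun i _ => sq_nonneg _)
  -- Cauchy–Schwarz on S
  have hCS : ∑ i ∈ S, |δ i| ≤ Real.sqrt s * N := by
    have h1 : (∑ i ∈ S, |δ i|) ^ 2 ≤ S.card * ∑ i ∈ S, |δ i| ^ 2 :=
      sq_sum_le_card_mul_sum_sq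
    have h2 : ∑ i ∈ S, |δ i| ^ 2 ≤ ∑ i, δ i ^ 2 := by
      refine Finset.sum_le_sum_of_subset_of_nonneg (Finset.subset_univ S)
        (fun i _ _ => sq_nonneg _) |>.trans_eq ?_
      exact Finset.sum_congr rfl fun i _ => by rw [sq_abs]
    have h3 : (∑ i ∈ S, |δ i|) ^ 2 ≤ s * ∑ i, δ i ^ 2 := by
      calc (∑ i ∈ S, |δ i|) ^ 2 ≤ S.card * ∑ i ∈ S, |δ i| ^ 2 := h1
        _ ≤ s * ∑ i, δ i ^ 2 := by
            have hc : (S.card : ℝ) ≤ s := Nat.cast_le.mpr hS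
            have hnn : (0:ℝ) ≤ ∑ i ∈ S, |δ i| ^ 2 :=
              Finset.sum_nonneg fun i _ => sq_nonneg _
            nlinarith
    calc ∑ i ∈ S, |δ i| = Real.sqrt ((∑ i ∈ S, |δ i|) ^ 2) := (Real.sqrt_sq hSnn).symm
      _ ≤ Real.sqrt (s * ∑ i, δ i ^ 2) := Real.sqrt_le_sqrt h3
      _ = Real.sqrt s * N := by rw [Real.sqrt_mul (Nat.cast_nonneg s), hN]
  have hL1 : ∑ i, |δ i| ≤ 2 * Real.sqrt s * N := by
    rw [← hsplit (fun i => |δ i|)]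
    nlinarith
  have hkey : κ * N ^ 2 ≤ 4 * lam * Real.sqrt s * N := by
    rw [hN2]
    calc κ * ∑ i, δ i ^ 2 ≤ (∑ i, |δ i|) * (2 * lam) := hquad
      _ ≤ (2 * Real.sqrt s * N) * (2 * lam) := by
          refine mul_le_mul_of_nonneg_right hL1 (by linarith)
      _ = 4 * lam * Real.sqrt s * N := by ring
  have hNb : N ≤ 4 * lam * Real.sqrt s / κ := by
    rcases eq_or_lt_of_le hNnn with h | h
    · rw [← h]; positivity
    · rw [le_div_iff₀ hκ]
      nlinarith
  refine ⟨hcone, hNb, ?_⟩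
  calc ∑ i, |δ i| ≤ 2 * Real.sqrt s * N := hL1
    _ ≤ 2 * Real.sqrt s * (4 * lam * Real.sqrt s / κ) := by
        refine mul_le_mul_of_nonneg_left hNb (by positivity)
    _ = 8 * lam * (Real.sqrt s * Real.sqrt s) / κ := by ring
    _ = 8 * lam * s / κ := by
        rw [Real.mul_self_sqrt (Nat.cast_nonneg s)]
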